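/- arXiv:math/0405281 — 5 statements merged into one kernel-verified Lean document; each statement's English description precedes it below -/
import Mathlib

section
/- In any monotone-separable network, the variables X and Z are internally monotone: for every arrival process N, every mark sequence, and all integers m ≤ n, one has X_{[m-1,n]}(N) ≥ X_{[m,n]}(N) and Z_{[m-1,n]}(N) ≥ Z_{[m,n]}(N). In particular, the sequence n ↦ Z_{[-n,0]}(N) is nondecreasing. -/
open MeasureTheory Filter Set

/-- A monotone-separable network: `X m n T ζ` is the time of last activity for the
`[m,n]` restriction of the arrival process `T` with marks `ζ`.  `X m n` only depends on
the coordinates `T l, ζ l` for `m ≤ l ≤ n`, and satisfies causality, external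
monotonicity, homogeneity and separability. -/
structure MonSepNet (K : Type*) where
  X : ℤ → ℤ → (ℤ → ℝ) → (ℤ → K) → ℝ
  localDep : ∀ (m n : ℤ) (T T' : ℤ → ℝ) (ζ ζ' : ℤ → K),
      (∀ l, m ≤ l → l ≤ n → T l = T' l) → (∀ l, m ≤ l → l ≤ n → ζ l = ζ' l) →
      X m n T ζ = X m n T' ζ'
  causality : ∀ (m n : ℤ) (T : ℤ → ℝ) (ζ : ℤ → K), m ≤ n → Monotone T →
      T n ≤ X m n T ζ
  extMono : ∀ (m n : ℤ) (T T' : ℤ → ℝ) (ζ : ℤ → K), m ≤ n → Monotone T → Monotone T' →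
      (∀ l, T l ≤ T' l) → X m n T ζ ≤ X m n T' ζ
  homogeneity : ∀ (m n : ℤ) (T : ℤ → ℝ) (ζ : ℤ → K) (c : ℝ), m ≤ n → Monotone T →
      X m n (fun l => T l + c) ζ = X m n T ζ + c
  separability : ∀ (m l n : ℤ) (T : ℤ → ℝ) (ζ : ℤ → K), m ≤ l → l < n → Monotone T →
      X m l T ζ ≤ T (l + 1) → X m n T ζ = X (l + 1) n T ζ

/-- The `[m,n]` maximal dater `Z_{[m,n]}(N) = X_{[m,n]}(N) - T_n`. -/
noncomputable def MonSepNet.Z {K : Type*} (net : MonSepNet K)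
    (m n : ℤ) (T : ℤ → ℝ) (ζ : ℤ → K) : ℝ :=
  net.X m n T ζ - T n

/-- **Internal monotonicity of `X` and `Z`** (Lemma 1): for every arrival process,
every mark sequence and all `m ≤ n`, `X_{[m-1,n]} ≥ X_{[m,n]}` and `Z_{[m-1,n]} ≥ Z_{[m,n]}`;
in particular `n ↦ Z_{[-n,0]}` is nondecreasing. -/
theorem internal_monotonicity {K : Type*} (net : MonSepNet K)
    (T : ℤ → ℝ) (hT : Monotone T) (ζ : ℤ → K) :
    (∀ m n : ℤ, m ≤ n →
      net.X m n T ζ ≤ net.X (m - 1) n T ζ ∧ net.Z m n T ζ ≤ net.Z (m - 1) n T ζ) ∧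
    Monotone (fun n : ℕ => net.Z (-(n : ℤ)) 0 T ζ) := by
  have key : ∀ m n : ℤ, m ≤ n → net.X m n T ζ ≤ net.X (m - 1) n T ζ := by
    intro m n hmn
    set C : ℝ := max 0 (net.X (m-1) (m-1) T ζ - T m) with hC
    have hC0 : 0 ≤ C := le_max_left _ _
    set T' : ℤ → ℝ := fun l => if l ≤ m - 1 then T l - C else T l with hT'
    have hT'mono : Monotone T' := by
      intro a b hab
      simp only [hT']
      by_cases hb : b ≤ m - 1
      · rw [if_pos (hab.trans hb), if_pos hb]; have := hT hab; linarith
      · rw [if_neg hb]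
        by_cases ha : a ≤ m - 1
        · rw [if_pos ha]; have := hT hab; linarith
        · rw [if_neg ha]; exact hT hab
    have hle : ∀ l, T' l ≤ T l := by
      intro l; simp only [hT']; split <;> linarith
    have h1 : net.X (m-1) (m-1) T' ζ = net.X (m-1) (m-1) T ζ - C := by
      have heq := net.localDep (m-1) (m-1) T' (fun l => T l + (-C)) ζ ζ
        (by intro l _ h2; simp only [hT']; rw [if_pos h2]; ring) (fun _ _ _ => rfl)
      rw [heq, net.homogeneity (m-1) (m-1) T ζ (-C) le_rfl hT]; ring
    have h2 : net.X (m-1) (m-1) T' ζ ≤ T' ((m-1)+1) := by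
      have hTm : T' ((m-1)+1) = T m := by
        simp only [hT']; rw [if_neg (by omega)]; congr 1; omega
      rw [hTm, h1]
      have : net.X (m-1) (m-1) T ζ - T m ≤ C := le_max_right _ _
      linarith
    have hsep := net.separability (m-1) (m-1) n T' ζ le_rfl (by omega) hT'mono h2
    have h3 : net.X ((m-1)+1) n T' ζ = net.X m n T ζ := by
      have hm : (m-1)+1 = m := by ring
      rw [hm]
      exact net.localDep m n T' T ζ ζ
        (by intro l h1 _; simp only [hT']; rw [if_neg (by omega)]) (fun _ _ _ => rfl)
    have h4 := net.extMono (m-1) n T' T ζ (by omega) hT'mono hT hle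
    rw [hsep, h3] at h4
    exact h4
  constructor
  · intro m n hmn
    refine ⟨key m n hmn, ?_⟩
    simp only [MonSepNet.Z]
    linarith [key m n hmn]
  · apply monotone_nat_of_le_succ
    intro n
    have h := key (-(n:ℤ)) 0 (by omega)
    simp only [MonSepNet.Z]
    have he : (-(↑(n+1):ℤ)) = (-(n:ℤ)) - 1 := by push_cast; ring
    rw [he]
    linarith
end

section
/- In any monotone-separable network, the maximal daters are subadditive: for every arrival process N, every mark sequence, and all integers m ≤ l < n, one has Z_{[m,n]}(N) ≤ Z_{[m,l]}(N) + Z_{[l+1,n]}(N). -/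
open MeasureTheory Filter Set

/-- **Subadditivity of the maximal daters** (Lemma 2): for every arrival process `N`,
every mark sequence and all `m ≤ l < n`,
`Z_{[m,n]}(N) ≤ Z_{[m,l]}(N) + Z_{[l+1,n]}(N)`. -/
theorem subadditivity_of_maximal_daters {K : Type*} (net : MonSepNet K)
    (T : ℤ → ℝ) (hT : Monotone T) (ζ : ℤ → K) (m l n : ℤ) (hml : m ≤ l) (hln : l < n) :
    net.Z m n T ζ ≤ net.Z m l T ζ + net.Z (l + 1) n T ζ := by
  set c : ℝ := net.X m l T ζ - T l with hc
  have hc0 : 0 ≤ c := by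
    have := net.causality m l T ζ hml hT
    simp [hc]; linarith
  set T' : ℤ → ℝ := fun k => if k ≤ l then T k else T k + c with hT'
  have hT'mono : Monotone T' := by
    intro a b hab
    simp only [hT']
    by_cases ha : a ≤ l <;> by_cases hb : b ≤ l <;> simp [ha, hb]
    · exact hT hab
    · have := hT hab; linarith
    · exact absurd (hab.trans hb) ha
    · have := hT hab; linarith
  have hle : ∀ k, T k ≤ T' k := by
    intro k; simp only [hT']; by_cases hk : k ≤ l <;> simp [hk] <;> linarith
  have h1 : net.X m l T' ζ = net.X m l T ζ := by
    refine net.localDep m l T' T ζ ζ (fun k _ hk => by simp [hT', hk]) (fun _ _ _ => rfl)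
  have hsep : net.X m l T' ζ ≤ T' (l + 1) := by
    rw [h1]
    have : ¬ (l + 1 ≤ l) := by omega
    simp [hT', this]
    have h := hT (show l ≤ l + 1 by omega)
    simp [hc]; linarith
  have h2 : net.X m n T' ζ = net.X (l + 1) n T' ζ :=
    net.separability m l n T' ζ hml hln hT'mono hsep
  have h3 : net.X (l + 1) n T' ζ = net.X (l + 1) n T ζ + c := by
    have : net.X (l + 1) n T' ζ = net.X (l + 1) n (fun k => T k + c) ζ := by
      refine net.localDep (l+1) n T' _ ζ ζ (fun k hk _ => ?_) (fun _ _ _ => rfl)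
      have : ¬ (k ≤ l) := by omega
      simp [hT', this]
    rw [this, net.homogeneity (l+1) n T ζ c (by omega) hT]
  have h4 : net.X m n T ζ ≤ net.X m n T' ζ :=
    net.extMono m n T T' ζ (by omega) hT hT'mono hle
  simp only [MonSepNet.Z]
  have : net.X m n T ζ ≤ net.X (l + 1) n T ζ + c := by
    calc net.X m n T ζ ≤ net.X m n T' ζ := h4
    _ = net.X (l + 1) n T ζ + c := by rw [h2, h3]
  linarith
end

section
/- In any monotone-separable network, for every arrival process N with T_0 = 0 and all integers m < n ≤ 0, one has Z_{[m,0]}(N) ≤ Z_{[n,0]}(N) + max(0, Z_{[m,n−1]}(N) − τ_{n−1}), where τ_{n−1} = T_n − T_{n−1}. -/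
open MeasureTheory Filter Set

/-- **Lemma 5**: in any monotone-separable network, for every arrival process `N` with
`T_0 = 0` and all integers `m < n ≤ 0`,
`Z_{[m,0]}(N) ≤ Z_{[n,0]}(N) + max(0, Z_{[m,n-1]}(N) - τ_{n-1})`,
where `τ_{n-1} = T_n - T_{n-1}`. -/
theorem upper_bound_lemma {K : Type*} (net : MonSepNet K)
    (T : ℤ → ℝ) (hT : Monotone T) (hT0 : T 0 = 0) (ζ : ℤ → K)
    (m n : ℤ) (hmn : m < n) (hn : n ≤ 0) :
    net.Z m 0 T ζ ≤
      net.Z n 0 T ζ + max 0 (net.Z m (n - 1) T ζ - (T n - T (n - 1))) := by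
  set c : ℝ := max 0 (net.Z m (n - 1) T ζ - (T n - T (n - 1))) with hc
  have hc0 : 0 ≤ c := le_max_left _ _
  set T' : ℤ → ℝ := fun l => T l + if n ≤ l then c else 0 with hT'
  have hT'mono : Monotone T' := by
    intro a b hab
    simp only [hT']
    gcongr
    · exact hT hab
    · split_ifs with h1 h2
      · exact le_refl c
      · exact absurd (h1.trans hab) h2
      · exact hc0
      · exact le_refl 0
  have hle : ∀ l, T l ≤ T' l := by
    intro l; simp only [hT']
    split_ifs <;> simp [hc0]
  -- T' agrees with T on [m, n-1]
  have hagree : net.X m (n - 1) T' ζ = net.X m (n - 1) T ζ := by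
    refine net.localDep m (n - 1) T' T ζ ζ (fun l _ hl => ?_) (fun _ _ _ => rfl)
    simp only [hT', if_neg (by omega : ¬ n ≤ l), add_zero]
  -- separability condition at l = n - 1
  have hsep_cond : net.X m (n - 1) T' ζ ≤ T' ((n - 1) + 1) := by
    rw [hagree]
    have : net.Z m (n - 1) T ζ - (T n - T (n - 1)) ≤ c := le_max_right _ _
    simp only [MonSepNet.Z] at this
    have hTn : T' ((n - 1) + 1) = T n + c := by
      simp only [hT']; rw [if_pos (by omega)]; ring_nf
    rw [hTn]; linarith
  have hsep : net.X m 0 T' ζ = net.X n 0 T' ζ := by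
    have := net.separability m (n - 1) 0 T' ζ (by omega) (by omega) hT'mono hsep_cond
    simpa using this
  -- on [n, 0], T' = T + c
  have hshift : net.X n 0 T' ζ = net.X n 0 T ζ + c := by
    have h1 : net.X n 0 T' ζ = net.X n 0 (fun l => T l + c) ζ :=
      net.localDep n 0 T' (fun l => T l + c) ζ ζ
        (fun l hl _ => by simp only [hT', if_pos hl]) (fun _ _ _ => rfl)
    rw [h1, net.homogeneity n 0 T ζ c hn hT]
  have hmain : net.X m 0 T ζ ≤ net.X n 0 T ζ + c := by
    calc net.X m 0 T ζ ≤ net.X m 0 T' ζ :=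
          net.extMono m 0 T T' ζ (by omega) hT hT'mono hle
      _ = net.X n 0 T ζ + c := by rw [hsep, hshift]
  simp only [MonSepNet.Z]
  linarith
end

section
/- Fork-join lower bound: in any monotone-separable network, suppose that for some r ≥ 1 there are nonnegative numbers Y_i^{(j)} (i ∈ ℤ, 1 ≤ j ≤ r) such that Z_{[n,0]}(Q) ≥ max_{1≤j≤r} Σ_{i=n}^{0} Y_i^{(j)} for all n ≤ 0. Then for every arrival process N with T_0 = 0, Z_{(−∞,0]}(N) ≥ max_{1≤j≤r} sup_{n≤0} ( Σ_{i=n}^{0} Y_i^{(j)} − Σ_{i=n}^{−1} τ_i ), where τ_i = T_{i+1} − T_i; that is, Z_{(−∞,0]}(N) dominates the stationary response time of the r-dimensional fork-join queue with service times Y_i^{(j)} and interarrival times τ_i. -/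
open MeasureTheory Filter Set

/-- **Fork-join lower bound** (Lemma 6): if nonnegative numbers `Y_i^{(j)}`, `1 ≤ j ≤ r`,
satisfy `Z_{[n,0]}(Q) ≥ max_j Σ_{i=n}^{0} Y_i^{(j)}` for all `n ≤ 0`, then for every
arrival process `N` with `T_0 = 0`, the stationary maximal dater
`Z_{(-∞,0]}(N) = sup_n Z_{[-n,0]}(N)` (in the extended reals) dominates
`max_j sup_{n ≤ 0} (Σ_{i=n}^{0} Y_i^{(j)} - Σ_{i=n}^{-1} τ_i)`, the stationary response
time of the `r`-dimensional fork-join queue (here `Σ_{i=n}^{-1} τ_i = T_0 - T_n`). -/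
theorem fork_join_lower_bound {K : Type*} (net : MonSepNet K)
    (r : ℕ) (hr : 1 ≤ r) (Y : ℤ → Fin r → ℝ) (hY : ∀ i j, 0 ≤ Y i j) (ζ : ℤ → K)
    (hQ : ∀ n : ℤ, n ≤ 0 → ∀ j : Fin r,
      (∑ i ∈ Finset.Icc n 0, Y i j) ≤ net.Z n 0 (fun _ => 0) ζ)
    (T : ℤ → ℝ) (hT : Monotone T) (hT0 : T 0 = 0) :
    ∀ (j : Fin r) (n : ℤ), n ≤ 0 →
      (((∑ i ∈ Finset.Icc n 0, Y i j) - (T 0 - T n) : ℝ) : EReal) ≤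
        ⨆ k : ℕ, ((net.Z (-(k : ℤ)) 0 T ζ : ℝ) : EReal) := by
  intro j n hn
  have key : (∑ i ∈ Finset.Icc n 0, Y i j) - (T 0 - T n) ≤ net.Z n 0 T ζ := by
    have hQ' := hQ n hn j
    -- T'' agrees with T on [n,0] and dominates the constant T n
    set T'' : ℤ → ℝ := fun l => max (T l) (T n) with hT''
    have hT''mono : Monotone T'' := hT.max monotone_const
    have h1 : net.X n 0 (fun _ => T n) ζ ≤ net.X n 0 T'' ζ :=
      net.extMono n 0 (fun _ => T n) T'' ζ hn monotone_const hT''mono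
        (fun l => le_max_right _ _)
    have h2 : net.X n 0 T'' ζ = net.X n 0 T ζ :=
      net.localDep n 0 T'' T ζ ζ (fun l hl _ => max_eq_left (hT hl)) (fun _ _ _ => rfl)
    have h3 : net.X n 0 (fun _ => T n) ζ = net.X n 0 (fun _ => 0) ζ + T n := by
      have := net.homogeneity n 0 (fun _ => 0) ζ (T n) hn monotone_const
      simpa using this
    have : net.X n 0 (fun _ => 0) ζ + T n ≤ net.X n 0 T ζ := by
      rw [← h3, ← h2]; exact h1
    simp only [MonSepNet.Z] at hQ' ⊢
    linarith
  have hk : (-((-n).toNat : ℤ)) = n := by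
    rw [Int.toNat_of_nonneg (neg_nonneg.mpr hn)]; ring
  calc (((∑ i ∈ Finset.Icc n 0, Y i j) - (T 0 - T n) : ℝ) : EReal)
      ≤ ((net.Z n 0 T ζ : ℝ) : EReal) := EReal.coe_le_coe_iff.mpr key
    _ = ((net.Z (-(((-n).toNat : ℕ) : ℤ)) 0 T ζ : ℝ) : EReal) := by rw [hk]
    _ ≤ ⨆ k : ℕ, ((net.Z (-(k : ℤ)) 0 T ζ : ℝ) : EReal) := le_iSup (fun k : ℕ => ((net.Z (-(k : ℤ)) 0 T ζ : ℝ) : EReal)) (-n).toNat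
end

section
/- Necessity of moments: in a monotone-separable network satisfying (IA) and (AA), for any α > 1: if E[Z_{(−∞,0]}^{α−1}] < ∞, then E[Z_0^{α}] < ∞. -/
open MeasureTheory Filter Set

open ProbabilityTheory
open scoped ENNReal

open MeasureTheory Filter Set

lemma aux_iSup_rpow (u : ℕ → ENNReal) {c : ℝ} (hc : 0 < c) :
    (⨆ n, u n ^ c) = (⨆ n, u n) ^ c := by
  apply le_antisymm
  · exact iSup_le fun n => ENNReal.rpow_le_rpow (le_iSup u n) hc.le
  · have h1 : (⨆ n, u n) ≤ (⨆ n, u n ^ c) ^ c⁻¹ := by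
      refine iSup_le fun n => ?_
      have : u n = (u n ^ c) ^ c⁻¹ := by
        rw [← ENNReal.rpow_mul, mul_inv_cancel₀ hc.ne', ENNReal.rpow_one]
      rw [this]
      exact ENNReal.rpow_le_rpow (le_iSup (fun n => u n ^ c) n) (by positivity)
    calc (⨆ n, u n) ^ c ≤ ((⨆ n, u n ^ c) ^ c⁻¹) ^ c := ENNReal.rpow_le_rpow h1 hc.le
      _ = ⨆ n, u n ^ c := by
        rw [← ENNReal.rpow_mul, inv_mul_cancel₀ hc.ne', ENNReal.rpow_one]

lemma aux_bonferroni {Ω : Type*} [MeasurableSpace Ω] (μ : Measure Ω) (D : ℕ → Set Ω)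
    (hD : ∀ n, MeasurableSet (D n)) (s : Finset ℕ) :
    ∑ n ∈ s, μ (D n) ≤ μ (⋃ n ∈ s, D n) + ∑ n ∈ s, ∑ m ∈ s.erase n, μ (D m ∩ D n) := by
  classical
  induction s using Finset.induction with
  | empty => simp
  | insert k s hk ih =>
    have hUmeas : MeasurableSet (⋃ n ∈ s, D n) := by
      exact MeasurableSet.biUnion s.countable_toSet (fun n _ => hD n)
    have hcap : μ (D k ∩ ⋃ n ∈ s, D n) ≤ ∑ n ∈ s, μ (D k ∩ D n) := by
      rw [Set.inter_iUnion₂]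
      exact measure_biUnion_finset_le s _
    have hunion : μ (D k) + μ (⋃ n ∈ s, D n) =
        μ (D k ∪ ⋃ n ∈ s, D n) + μ (D k ∩ ⋃ n ∈ s, D n) :=
      (measure_union_add_inter (D k) hUmeas).symm
    have hpairs : ∑ n ∈ insert k s, ∑ m ∈ (insert k s).erase n, μ (D m ∩ D n) =
        (∑ m ∈ s, μ (D m ∩ D k)) + ∑ n ∈ s, (μ (D k ∩ D n) + ∑ m ∈ s.erase n, μ (D m ∩ D n)) := by
      rw [Finset.sum_insert hk, Finset.erase_insert hk]
      congr 1
      refine Finset.sum_congr rfl fun n hn => ?_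
      rw [Finset.erase_insert_of_ne (by rintro rfl; exact hk hn), Finset.sum_insert (by intro h; exact hk (Finset.mem_of_mem_erase h))]
    calc ∑ n ∈ insert k s, μ (D n) = μ (D k) + ∑ n ∈ s, μ (D n) := Finset.sum_insert hk
      _ ≤ μ (D k) + (μ (⋃ n ∈ s, D n) + ∑ n ∈ s, ∑ m ∈ s.erase n, μ (D m ∩ D n)) := by
          gcongr
      _ = (μ (D k) + μ (⋃ n ∈ s, D n)) + ∑ n ∈ s, ∑ m ∈ s.erase n, μ (D m ∩ D n) := by ring
      _ = (μ (D k ∪ ⋃ n ∈ s, D n) + μ (D k ∩ ⋃ n ∈ s, D n))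
            + ∑ n ∈ s, ∑ m ∈ s.erase n, μ (D m ∩ D n) := by rw [hunion]
      _ ≤ μ (⋃ n ∈ insert k s, D n) + ((∑ n ∈ s, μ (D k ∩ D n))
            + ∑ n ∈ s, ∑ m ∈ s.erase n, μ (D m ∩ D n)) := by
          rw [Finset.set_biUnion_insert]
          have h2 : μ (D k ∩ ⋃ n ∈ s, D n) ≤ ∑ n ∈ s, μ (D k ∩ D n) := hcap
          -- rearrange
          calc (μ (D k ∪ ⋃ n ∈ s, D n) + μ (D k ∩ ⋃ n ∈ s, D n))
                + ∑ n ∈ s, ∑ m ∈ s.erase n, μ (D m ∩ D n)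
              ≤ (μ (D k ∪ ⋃ n ∈ s, D n) + ∑ n ∈ s, μ (D k ∩ D n))
                + ∑ n ∈ s, ∑ m ∈ s.erase n, μ (D m ∩ D n) := by gcongr
            _ = μ (D k ∪ ⋃ n ∈ s, D n) + ((∑ n ∈ s, μ (D k ∩ D n))
                + ∑ n ∈ s, ∑ m ∈ s.erase n, μ (D m ∩ D n)) := by ring
      _ ≤ μ (⋃ n ∈ insert k s, D n) + ∑ n ∈ insert k s, ∑ m ∈ (insert k s).erase n, μ (D m ∩ D n) := by
          rw [hpairs, Finset.sum_add_distrib]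
          exact add_le_add_right le_add_self _

lemma aux_iUnion_Ioc (c b : ℝ) (hb : 0 < b) :
    (⋃ k : ℕ, Ioc (c + b * k) (c + b * (k + 1))) = Ioi c := by
  ext s
  simp only [mem_iUnion, mem_Ioc, mem_Ioi]
  constructor
  · rintro ⟨k, h1, _⟩
    have : (0:ℝ) ≤ b * k := by positivity
    linarith
  · intro hs
    have hex : ∃ k : ℕ, s ≤ c + b * (k + 1) := by
      obtain ⟨n, hn⟩ := exists_nat_gt ((s - c) / b)
      refine ⟨n, ?_⟩
      have : s - c < b * n := by
        rw [div_lt_iff₀ hb] at hn; linarith [hn]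
      nlinarith [hb.le]
    classical
    refine ⟨Nat.find hex, ?_, Nat.find_spec hex⟩
    rcases Nat.eq_zero_or_pos (Nat.find hex) with h0 | hpos
    · rw [h0]; push_cast; linarith
    · obtain ⟨j, hj⟩ := Nat.exists_eq_succ_of_ne_zero hpos.ne'
      have := Nat.find_min hex (by omega : j < Nat.find hex)
      push_neg at this
      rw [hj]; push_cast; push_cast at this; linarith

lemma aux_lintegral_Ioi (G : ℝ → ENNReal) (c b : ℝ) (hb : 0 < b) :
    ∫⁻ s in Ioi c, G s = ∑' k : ℕ, ∫⁻ s in Ioc (c + b * k) (c + b * (k + 1)), G s := by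
  rw [← aux_iUnion_Ioc c b hb, lintegral_iUnion (fun k => measurableSet_Ioc)]
  intro i j hij
  simp only [Function.onFun]
  rw [Set.disjoint_left]
  rintro x ⟨h1, h2⟩ ⟨h3, h4⟩
  rcases lt_or_gt_of_ne hij with h | h
  · have : (i:ℝ) + 1 ≤ j := by exact_mod_cast h
    nlinarith
  · have : (j:ℝ) + 1 ≤ i := by exact_mod_cast h
    nlinarith

set_option maxHeartbeats 2000000 in
/-- **Necessity of moments** (Theorem 2): in a monotone-separable network satisfying
(IA) and (AA), for any `α > 1`: if `E[Z_{(-∞,0]}^{α-1}] < ∞`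
(as `∫ sup_n Z_{[-n,0]}^{α-1}`, a Lebesgue integral in `[0,∞]`), then `E[Z_0^α] < ∞`. -/
theorem necessity_of_moments {K : Type*} [MeasurableSpace K]
    {Ω : Type*} [MeasurableSpace Ω] {μ : Measure Ω} [IsProbabilityMeasure μ]
    (τ : ℤ → Ω → ℝ) (ζ : ℤ → Ω → K)
    (hτmeas : ∀ n, Measurable (τ n)) (hζmeas : ∀ n, Measurable (ζ n))
    (hτnonneg : ∀ n ω, 0 ≤ τ n ω)
    -- (IA): the two driving sequences are i.i.d. and mutually independent
    (hτiid : iIndepFun τ μ)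
    (hτident : ∀ n : ℤ, IdentDistrib (τ n) (τ 0) μ μ)
    (hζiid : iIndepFun ζ μ)
    (hζident : ∀ n : ℤ, IdentDistrib (ζ n) (ζ 0) μ μ)
    (hindep : IndepFun (fun ω (n : ℤ) => τ n ω) (fun ω (n : ℤ) => ζ n ω) μ)
    (T : ℤ → Ω → ℝ) (hT0 : ∀ ω, T 0 ω = 0)
    (hTrec : ∀ (n : ℤ) ω, T (n + 1) ω = T n ω + τ n ω)
    (net : MonSepNet K)
    (hZmeas : ∀ m n : ℤ,
      Measurable fun ω => net.Z m n (fun l => T l ω) (fun l => ζ l ω))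
    (hZQmeas : ∀ m n : ℤ,
      Measurable fun ω => net.Z m n (fun _ => 0) (fun l => ζ l ω))
    (a : ℝ) (ha : 0 < a)
    (hτint : Integrable (τ 0) μ) (hτmean : ∫ ω, τ 0 ω ∂μ = a)
    (hZ0int : Integrable (fun ω => net.Z 0 0 (fun l => T l ω) (fun l => ζ l ω)) μ)
    -- (AA): `Z_i = Y_i^{(1)} + ⋯ + Y_i^{(r)}` with i.i.d. nonnegative vectors
    -- independent of the interarrival times, and
    -- `Z_{[n,0]}(Q) ≥ max_j Σ_{i=n}^0 Y_i^{(j)}`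
    (r : ℕ) (hr : 1 ≤ r) (Y : ℤ → Fin r → Ω → ℝ)
    (hYmeas : ∀ i j, Measurable (Y i j))
    (hYnonneg : ∀ i j ω, 0 ≤ Y i j ω)
    (hZeq : ∀ (i : ℤ) ω, net.Z i i (fun l => T l ω) (fun l => ζ l ω) = ∑ j, Y i j ω)
    (hYiid : iIndepFun
      (fun i ω (j : Fin r) => Y i j ω) μ)
    (hYident : ∀ i : ℤ, IdentDistrib (fun ω (j : Fin r) => Y i j ω)
      (fun ω (j : Fin r) => Y 0 j ω) μ μ)
    (hYτindep : IndepFun (fun ω (i : ℤ) (j : Fin r) => Y i j ω)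
      (fun ω (i : ℤ) => τ i ω) μ)
    (hQlow : ∀ n : ℤ, n ≤ 0 → ∀ᵐ ω ∂μ, ∀ j : Fin r,
      (∑ i ∈ Finset.Icc n 0, Y i j ω) ≤ net.Z n 0 (fun _ => 0) (fun l => ζ l ω))
    (α : ℝ) (hα : 1 < α)
    -- `E[Z_{(-∞,0]}^{α-1}] < ∞`
    (hmom : (∫⁻ ω, ⨆ n : ℕ, ENNReal.ofReal
      (net.Z (-(n : ℤ)) 0 (fun l => T l ω) (fun l => ζ l ω) ^ (α - 1)) ∂μ) < ⊤) :
    Integrable (fun ω => net.Z 0 0 (fun l => T l ω) (fun l => ζ l ω) ^ α) μ := by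
  classical
  have hrpos : (0:ℝ) < (r:ℝ) := by exact_mod_cast hr
  have hr1 : (1:ℝ) ≤ (r:ℝ) := by exact_mod_cast hr
  have hα1 : (0:ℝ) < α - 1 := by linarith
  have hα0 : (0:ℝ) < α := by linarith
  set b : ℝ := 2 * a * (r:ℝ) with hbdef
  have hb : 0 < b := by positivity
  have hbne0 : ENNReal.ofReal b ≠ 0 := by
    rw [Ne, ENNReal.ofReal_eq_zero]; linarith
  -- T is monotone
  have hTmono : ∀ ω, Monotone (fun l => T l ω) := by
    intro ω
    apply monotone_int_of_le_succ
    intro n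
    show T n ω ≤ T (n + 1) ω
    rw [hTrec n ω]
    linarith [hτnonneg n ω]
  -- the maximal daters
  set M : ℕ → Ω → ℝ := fun n ω => net.Z (-(n:ℤ)) 0 (fun l => T l ω) (fun l => ζ l ω)
    with hMdef
  have hMmeas : ∀ n, Measurable (M n) := fun n => hZmeas _ _
  have hMnonneg : ∀ n ω, 0 ≤ M n ω := by
    intro n ω
    have h := net.causality (-(n:ℤ)) 0 (fun l => T l ω) (fun l => ζ l ω)
      (neg_nonpos.mpr (Int.natCast_nonneg n)) (hTmono ω)
    have h0 : T 0 ω = 0 := hT0 ω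
    simp only [hMdef, MonSepNet.Z]
    linarith
  set S : Ω → ℝ≥0∞ := fun ω => ⨆ n : ℕ, ENNReal.ofReal (M n ω) with hSdef
  have hSmeas : Measurable S := Measurable.iSup fun n => (hMmeas n).ennreal_ofReal
  have hSint : ∫⁻ ω, S ω ^ (α - 1) ∂μ < ⊤ := by
    refine lt_of_le_of_lt (le_of_eq (lintegral_congr fun ω => ?_)) hmom
    show S ω ^ (α - 1) = _
    rw [hSdef]
    rw [← aux_iSup_rpow _ hα1]
    exact iSup_congr fun n => ENNReal.ofReal_rpow_of_nonneg (hMnonneg n ω) hα1.le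
  -- the key network inequality : Z_{[-n,0]}(N) ≥ Z_{[-n,0]}(Q) + T_{-n}
  have hnet : ∀ ω (n : ℕ),
      net.Z (-(n:ℤ)) 0 (fun _ => 0) (fun l => ζ l ω) + T (-(n:ℤ)) ω ≤ M n ω := by
    intro ω n
    have hm : (-(n:ℤ)) ≤ 0 := neg_nonpos.mpr (Int.natCast_nonneg n)
    have hmono := hTmono ω
    have hminmono : Monotone (fun l => min (T l ω) (T (-(n:ℤ)) ω)) :=
      fun i j hij => min_le_min (hmono hij) le_rfl
    have h1 : net.X (-(n:ℤ)) 0 (fun l => min (T l ω) (T (-(n:ℤ)) ω)) (fun l => ζ l ω)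
        ≤ net.X (-(n:ℤ)) 0 (fun l => T l ω) (fun l => ζ l ω) :=
      net.extMono _ 0 _ _ _ hm hminmono hmono (fun l => min_le_left _ _)
    have h2 : net.X (-(n:ℤ)) 0 (fun l => min (T l ω) (T (-(n:ℤ)) ω)) (fun l => ζ l ω)
        = net.X (-(n:ℤ)) 0 (fun l => (fun _ : ℤ => (0:ℝ)) l + T (-(n:ℤ)) ω) (fun l => ζ l ω) := by
      refine net.localDep _ 0 _ _ _ _ (fun l hl _ => ?_) (fun _ _ _ => rfl)
      have : T (-(n:ℤ)) ω ≤ T l ω := hmono hl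
      simp [min_eq_right this]
    have h3 : net.X (-(n:ℤ)) 0 (fun l => (fun _ : ℤ => (0:ℝ)) l + T (-(n:ℤ)) ω) (fun l => ζ l ω)
        = net.X (-(n:ℤ)) 0 (fun _ => 0) (fun l => ζ l ω) + T (-(n:ℤ)) ω :=
      net.homogeneity _ 0 (fun _ => 0) (fun l => ζ l ω) _ hm monotone_const
    have h0 : T 0 ω = 0 := hT0 ω
    simp only [hMdef, MonSepNet.Z]
    simp only at h1 h2 h3 ⊢
    rw [h2, h3] at h1
    linarith
  -- partial sums of interarrival times
  have hUT : ∀ (n : ℕ) ω,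
      T (-(n:ℤ)) ω + (∑ m ∈ Finset.range n, τ (-1 - (m:ℤ)) ω) = 0 := by
    intro n ω
    induction n with
    | zero => simpa using hT0 ω
    | succ n ih =>
      rw [Finset.sum_range_succ]
      have harg : (-((n+1:ℕ):ℤ)) + 1 = -(n:ℤ) := by push_cast; ring
      have hrec := hTrec (-((n+1:ℕ):ℤ)) ω
      rw [harg] at hrec
      have harg2 : (-1 - (n:ℤ)) = -((n+1:ℕ):ℤ) := by push_cast; ring
      rw [harg2]
      linarith
  -- basic measurability and distribution facts
  have hsum_meas : Measurable fun v : Fin r → ℝ => ∑ j, v j :=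
    Finset.measurable_sum _ fun j _ => measurable_pi_apply j
  have hVmeas : ∀ i : ℤ, Measurable fun ω => ∑ j, Y i j ω :=
    fun i => Finset.measurable_sum _ fun j _ => hYmeas i j
  have hV0nn : ∀ ω, 0 ≤ ∑ j, Y 0 j ω := fun ω => Finset.sum_nonneg fun j _ => hYnonneg 0 j ω
  set G : ℝ → ℝ≥0∞ := fun t => μ {ω | t < ∑ j, Y 0 j ω} with hGdef
  have hGanti : Antitone G := by
    intro t t' htt'
    exact measure_mono fun ω hω => lt_of_le_of_lt htt' hω
  have hGmeas : Measurable G := hGanti.measurable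
  have hGident : ∀ (i : ℤ) (c : ℝ), μ {ω | c < ∑ j, Y i j ω} = G c := by
    intro i c
    have hid : IdentDistrib (fun ω => ∑ j, Y i j ω) (fun ω => ∑ j, Y 0 j ω) μ μ :=
      (hYident i).comp hsum_meas
    show μ ((fun ω => ∑ j, Y i j ω) ⁻¹' (Ioi c)) = μ ((fun ω => ∑ j, Y 0 j ω) ⁻¹' (Ioi c))
    rw [← Measure.map_apply (hVmeas i) measurableSet_Ioi,
      ← Measure.map_apply (hVmeas 0) measurableSet_Ioi, hid.map_eq]
  -- total mass of the tail integral
  have hV0int : Integrable (fun ω => ∑ j, Y 0 j ω) μ := by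
    have he : (fun ω => net.Z 0 0 (fun l => T l ω) fun l => ζ l ω)
        = fun ω => ∑ j, Y 0 j ω := funext fun ω => hZeq 0 ω
    rw [← he]; exact hZ0int
  have hI0 : ∫⁻ t in Ioi (0:ℝ), G t < ⊤ := by
    have hlc := lintegral_eq_lintegral_meas_lt μ (Eventually.of_forall hV0nn)
      (hVmeas 0).aemeasurable
    rw [hGdef]
    rw [← hlc]
    exact hV0int.lintegral_lt_top
  -- Markov bound for interarrival sums
  have hBhalf : ∀ k : ℕ, (2⁻¹ : ℝ≥0∞) ≤
      μ {ω | ∑ m ∈ Finset.range (k+1), τ (-1 - (m:ℤ)) ω ≤ 2*a*((k:ℝ)+1)} := by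
    intro k
    have hUmeas : Measurable fun ω => ∑ m ∈ Finset.range (k+1), τ (-1 - (m:ℤ)) ω :=
      Finset.measurable_sum _ fun m _ => hτmeas _
    have hUnn : ∀ ω, 0 ≤ ∑ m ∈ Finset.range (k+1), τ (-1 - (m:ℤ)) ω :=
      fun ω => Finset.sum_nonneg fun m _ => hτnonneg _ ω
    have hτint' : ∀ m : ℤ, Integrable (τ m) μ := fun m => (hτident m).integrable_iff.mpr hτint
    have hUint : Integrable (fun ω => ∑ m ∈ Finset.range (k+1), τ (-1 - (m:ℤ)) ω) μ :=
      integrable_finset_sum _ fun m _ => hτint' _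
    have hUmean : ∫ ω, (∑ m ∈ Finset.range (k+1), τ (-1 - (m:ℤ)) ω) ∂μ = ((k:ℝ)+1) * a := by
      rw [integral_finset_sum _ fun m _ => hτint' _]
      have : ∀ m ∈ Finset.range (k+1), ∫ ω, τ (-1 - (m:ℤ)) ω ∂μ = a := by
        intro m _
        rw [(hτident (-1 - (m:ℤ))).integral_eq, hτmean]
      rw [Finset.sum_congr rfl this, Finset.sum_const, Finset.card_range, nsmul_eq_mul]
      push_cast; ring
    have hlin : ∫⁻ ω, ENNReal.ofReal (∑ m ∈ Finset.range (k+1), τ (-1 - (m:ℤ)) ω) ∂μ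
        = ENNReal.ofReal (((k:ℝ)+1) * a) := by
      rw [← ofReal_integral_eq_lintegral_ofReal hUint (Eventually.of_forall hUnn), hUmean]
    have hc : (0:ℝ) < 2*a*((k:ℝ)+1) := by positivity
    have hmark := mul_meas_ge_le_lintegral₀ (μ := μ) (hUmeas.ennreal_ofReal.aemeasurable)
      (ENNReal.ofReal (2*a*((k:ℝ)+1)))
    rw [hlin] at hmark
    have hval : ENNReal.ofReal (((k:ℝ)+1) * a)
        = ENNReal.ofReal (2*a*((k:ℝ)+1)) * 2⁻¹ := by
      rw [show ((k:ℝ)+1) * a = (2*a*((k:ℝ)+1)) * (2⁻¹:ℝ) by ring,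
        ENNReal.ofReal_mul hc.le, ENNReal.ofReal_inv_of_pos two_pos, ENNReal.ofReal_ofNat]
    rw [hval] at hmark
    have hofne0 : ENNReal.ofReal (2*a*((k:ℝ)+1)) ≠ 0 := by
      rw [Ne, ENNReal.ofReal_eq_zero]; linarith
    have h2 : μ {ω | ¬ (∑ m ∈ Finset.range (k+1), τ (-1 - (m:ℤ)) ω ≤ 2*a*((k:ℝ)+1))} ≤ 2⁻¹ := by
      have hsub : {ω | ¬ (∑ m ∈ Finset.range (k+1), τ (-1 - (m:ℤ)) ω ≤ 2*a*((k:ℝ)+1))}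
          ⊆ {ω | ENNReal.ofReal (2*a*((k:ℝ)+1))
              ≤ ENNReal.ofReal (∑ m ∈ Finset.range (k+1), τ (-1 - (m:ℤ)) ω)} :=
        fun ω hω => ENNReal.ofReal_le_ofReal (le_of_lt (not_le.mp hω))
      exact le_trans (measure_mono hsub)
        ((ENNReal.mul_le_mul_iff_right hofne0 ENNReal.ofReal_ne_top).mp hmark)
    have hmeasns : MeasurableSet {ω | ¬ (∑ m ∈ Finset.range (k+1), τ (-1 - (m:ℤ)) ω
        ≤ 2*a*((k:ℝ)+1))} := by
      have : {ω | ¬ (∑ m ∈ Finset.range (k+1), τ (-1 - (m:ℤ)) ω ≤ 2*a*((k:ℝ)+1))}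
          = {ω | 2*a*((k:ℝ)+1) < ∑ m ∈ Finset.range (k+1), τ (-1 - (m:ℤ)) ω} := by
        ext ω; simp [not_le]
      rw [this]
      exact measurableSet_lt measurable_const hUmeas
    have hcompl : μ {ω | ∑ m ∈ Finset.range (k+1), τ (-1 - (m:ℤ)) ω ≤ 2*a*((k:ℝ)+1)}
        = 1 - μ {ω | ¬ (∑ m ∈ Finset.range (k+1), τ (-1 - (m:ℤ)) ω ≤ 2*a*((k:ℝ)+1))} := by
      rw [← prob_compl_eq_one_sub hmeasns]
      congr 1
      ext ω; simp
    rw [hcompl]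
    calc (2⁻¹ : ℝ≥0∞) = 1 - 2⁻¹ := ENNReal.one_sub_inv_two.symm
      _ ≤ _ := tsub_le_tsub_left h2 1
  -- independence facts
  have hAind : ∀ (i i' : ℤ), i ≠ i' → ∀ (c c' : ℝ),
      μ ({ω | c < ∑ j, Y i j ω} ∩ {ω | c' < ∑ j, Y i' j ω})
        = μ {ω | c < ∑ j, Y i j ω} * μ {ω | c' < ∑ j, Y i' j ω} := by
    intro i i' hne c c'
    have h1 : IndepFun (fun ω => ∑ j, Y i j ω) (fun ω => ∑ j, Y i' j ω) μ :=
      (hYiid.indepFun hne).comp hsum_meas hsum_meas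
    exact h1.measure_inter_preimage_eq_mul _ _ measurableSet_Ioi measurableSet_Ioi
  have hABind : ∀ (k : ℕ) (c c' : ℝ),
      μ ({ω | c < ∑ j, Y (-(k:ℤ)-1) j ω}
          ∩ {ω | ∑ m ∈ Finset.range (k+1), τ (-1 - (m:ℤ)) ω ≤ c'})
        = μ {ω | c < ∑ j, Y (-(k:ℤ)-1) j ω}
          * μ {ω | ∑ m ∈ Finset.range (k+1), τ (-1 - (m:ℤ)) ω ≤ c'} := by
    intro k c c'
    have hφ : Measurable fun f : ℤ → Fin r → ℝ => ∑ j, f (-(k:ℤ)-1) j :=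
      Finset.measurable_sum _ fun j _ => (measurable_pi_apply j).comp (measurable_pi_apply _)
    have hψ : Measurable fun g : ℤ → ℝ => ∑ m ∈ Finset.range (k+1), g (-1 - (m:ℤ)) :=
      Finset.measurable_sum _ fun m _ => measurable_pi_apply _
    have h1 : IndepFun (fun ω => ∑ j, Y (-(k:ℤ)-1) j ω)
        (fun ω => ∑ m ∈ Finset.range (k+1), τ (-1 - (m:ℤ)) ω) μ :=
      hYτindep.comp hφ hψ
    exact h1.measure_inter_preimage_eq_mul _ _ measurableSet_Ioi measurableSet_Iic
  -- a.e. lower bound from (AA)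
  have hae : ∀ᵐ ω ∂μ, ∀ (n : ℕ) (j : Fin r),
      (∑ i ∈ Finset.Icc (-(n:ℤ)) 0, Y i j ω)
        ≤ net.Z (-(n:ℤ)) 0 (fun _ => 0) (fun l => ζ l ω) :=
    ae_all_iff.mpr fun n => hQlow (-(n:ℤ)) (neg_nonpos.mpr (Int.natCast_nonneg n))
  -- pointwise implication on the good event
  have hpoint : ∀ (x : ℝ), 0 ≤ x → ∀ (k : ℕ) ω,
      (∀ (n : ℕ) (j : Fin r), (∑ i ∈ Finset.Icc (-(n:ℤ)) 0, Y i j ω)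
        ≤ net.Z (-(n:ℤ)) 0 (fun _ => 0) (fun l => ζ l ω)) →
      ((r:ℝ)*x + b*((k:ℝ)+1) < ∑ j, Y (-(k:ℤ)-1) j ω) →
      (∑ m ∈ Finset.range (k+1), τ (-1 - (m:ℤ)) ω ≤ 2*a*((k:ℝ)+1)) →
      ENNReal.ofReal x < S ω := by
    intro x hx0 k ω hP hA hB
    have hi : (-((k+1:ℕ):ℤ)) = -(k:ℤ)-1 := by push_cast; ring
    have h1 : ∀ j, Y (-(k:ℤ)-1) j ω ≤ ∑ i ∈ Finset.Icc (-((k+1:ℕ):ℤ)) 0, Y i j ω := by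
      intro j
      refine Finset.single_le_sum (f := fun i => Y i j ω) (fun i _ => hYnonneg i j ω) ?_
      rw [Finset.mem_Icc]
      constructor
      · rw [hi]
      · omega
    have h2 : (∑ j, Y (-(k:ℤ)-1) j ω)
        ≤ (r:ℝ) * net.Z (-((k+1:ℕ):ℤ)) 0 (fun _ => 0) (fun l => ζ l ω) := by
      calc (∑ j, Y (-(k:ℤ)-1) j ω)
          ≤ ∑ j : Fin r, ∑ i ∈ Finset.Icc (-((k+1:ℕ):ℤ)) 0, Y i j ω :=
            Finset.sum_le_sum fun j _ => h1 j
        _ ≤ ∑ _j : Fin r, net.Z (-((k+1:ℕ):ℤ)) 0 (fun _ => 0) (fun l => ζ l ω) :=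
            Finset.sum_le_sum fun j _ => hP (k+1) j
        _ = (r:ℝ) * net.Z (-((k+1:ℕ):ℤ)) 0 (fun _ => 0) (fun l => ζ l ω) := by
            rw [Finset.sum_const, Finset.card_univ, Fintype.card_fin, nsmul_eq_mul]
    have h3 : x + 2*a*((k:ℝ)+1) < net.Z (-((k+1:ℕ):ℤ)) 0 (fun _ => 0) (fun l => ζ l ω) := by
      have hlt : (r:ℝ)*(x + 2*a*((k:ℝ)+1))
          < (r:ℝ) * net.Z (-((k+1:ℕ):ℤ)) 0 (fun _ => 0) (fun l => ζ l ω) := by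
        calc (r:ℝ)*(x + 2*a*((k:ℝ)+1)) = (r:ℝ)*x + b*((k:ℝ)+1) := by rw [hbdef]; ring
          _ < ∑ j, Y (-(k:ℤ)-1) j ω := hA
          _ ≤ _ := h2
      exact lt_of_mul_lt_mul_left hlt hrpos.le
    have h4 := hnet ω (k+1)
    have h5 := hUT (k+1) ω
    have hcast : ((k+1:ℕ):ℝ) = (k:ℝ)+1 := by push_cast; ring
    have h6 : x < M (k+1) ω := by
      rw [Finset.sum_range_succ] at h5
      have h5' : T (-((k+1:ℕ):ℤ)) ω
          = -(∑ m ∈ Finset.range (k+1), τ (-1 - (m:ℤ)) ω) := by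
        have := hUT (k+1) ω
        linarith
      have h4' := h4
      rw [h5'] at h4'
      linarith
    have h7 : ENNReal.ofReal x < ENNReal.ofReal (M (k+1) ω) :=
      (ENNReal.ofReal_lt_ofReal_iff_of_nonneg hx0).mpr h6
    have h8 : ENNReal.ofReal (M (k+1) ω) ≤ S ω := by
      rw [hSdef]
      exact le_iSup (fun n => ENNReal.ofReal (M n ω)) (k+1)
    exact lt_of_lt_of_le h7 h8
  -- interval comparison bounds
  have hlowG : ∀ (c : ℝ) (k : ℕ), ENNReal.ofReal b * G (c + b*((k:ℝ)+1))
      ≤ ∫⁻ s in Ioc (c + b*(k:ℝ)) (c + b*((k:ℝ)+1)), G s := by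
    intro c k
    have h1 : ∫⁻ _s in Ioc (c + b*(k:ℝ)) (c + b*((k:ℝ)+1)), G (c + b*((k:ℝ)+1))
        ≤ ∫⁻ s in Ioc (c + b*(k:ℝ)) (c + b*((k:ℝ)+1)), G s :=
      setLIntegral_mono hGmeas fun s hs => hGanti hs.2
    rwa [setLIntegral_const, Real.volume_Ioc,
      show c + b*((k:ℝ)+1) - (c + b*(k:ℝ)) = b by ring,
      mul_comm (G _) (ENNReal.ofReal b)] at h1
  have huppG : ∀ (c : ℝ) (k : ℕ), (∫⁻ s in Ioc (c + b*(k:ℝ)) (c + b*((k:ℝ)+1)), G s)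
      ≤ ENNReal.ofReal b * G (c + b*(k:ℝ)) := by
    intro c k
    have h1 : ∫⁻ s in Ioc (c + b*(k:ℝ)) (c + b*((k:ℝ)+1)), G s
        ≤ ∫⁻ _s in Ioc (c + b*(k:ℝ)) (c + b*((k:ℝ)+1)), G (c + b*(k:ℝ)) :=
      setLIntegral_mono measurable_const fun s hs => hGanti hs.1.le
    rwa [setLIntegral_const, Real.volume_Ioc,
      show c + b*((k:ℝ)+1) - (c + b*(k:ℝ)) = b by ring,
      mul_comm (G _) (ENNReal.ofReal b)] at h1
  -- choice of x1
  obtain ⟨x1, hx11, hx1tail⟩ : ∃ x1 : ℝ, 1 ≤ x1 ∧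
      (∫⁻ s in Ioi ((r:ℝ) * x1), G s) ≤ ENNReal.ofReal b * 4⁻¹ := by
    by_cases hc : (∫⁻ s in Ioi (0:ℝ), G s) ≤ ENNReal.ofReal b * 4⁻¹
    · refine ⟨1, le_rfl, le_trans (lintegral_mono_set (Ioi_subset_Ioi (by positivity))) hc⟩
    · push_neg at hc
      have hmono : Monotone (fun N : ℕ => (Ioc (0:ℝ) (N:ℝ)).indicator G) := by
        intro N N' hNN'
        exact indicator_le_indicator_of_subset
          (Ioc_subset_Ioc_right (by exact_mod_cast hNN')) (fun s => zero_le)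
      have hsupeq : ∀ s : ℝ, (⨆ N : ℕ, (Ioc (0:ℝ) (N:ℝ)).indicator G s)
          = (Ioi (0:ℝ)).indicator G s := by
        intro s
        by_cases hs : 0 < s
        · obtain ⟨N, hN⟩ := exists_nat_ge s
          apply le_antisymm
          · exact iSup_le fun N' =>
              indicator_le_indicator_of_subset (fun u hu => hu.1) (fun u => zero_le) s
          · calc (Ioi (0:ℝ)).indicator G s = G s := indicator_of_mem (mem_Ioi.mpr hs) G
              _ = (Ioc (0:ℝ) (N:ℝ)).indicator G s := (indicator_of_mem (mem_Ioc.mpr ⟨hs, hN⟩) G).symm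
              _ ≤ _ := le_iSup (fun N : ℕ => (Ioc (0:ℝ) (N:ℝ)).indicator G s) N
        · push_neg at hs
          rw [indicator_of_notMem (by simpa using hs)]
          have : ∀ N : ℕ, (Ioc (0:ℝ) (N:ℝ)).indicator G s = 0 := fun N =>
            indicator_of_notMem (fun h => absurd h.1 (not_lt.mpr hs)) G
          simp [this]
      have hkey : (⨆ N : ℕ, ∫⁻ s in Ioc (0:ℝ) (N:ℝ), G s) = ∫⁻ s in Ioi (0:ℝ), G s := by
        calc (⨆ N : ℕ, ∫⁻ s in Ioc (0:ℝ) (N:ℝ), G s)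
            = ⨆ N : ℕ, ∫⁻ s, (Ioc (0:ℝ) (N:ℝ)).indicator G s :=
              iSup_congr fun N => (lintegral_indicator measurableSet_Ioc G).symm
          _ = ∫⁻ s, ⨆ N : ℕ, (Ioc (0:ℝ) (N:ℝ)).indicator G s :=
              (lintegral_iSup (fun N => hGmeas.indicator measurableSet_Ioc) hmono).symm
          _ = ∫⁻ s, (Ioi (0:ℝ)).indicator G s := lintegral_congr hsupeq
          _ = ∫⁻ s in Ioi (0:ℝ), G s := lintegral_indicator measurableSet_Ioi G
      have hI0ne : (∫⁻ s in Ioi (0:ℝ), G s) ≠ ⊤ := hI0.ne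
      have hεne : (ENNReal.ofReal b * 4⁻¹) ≠ 0 :=
        mul_ne_zero hbne0 (ENNReal.inv_ne_zero.mpr (by norm_num))
      have hlt : (∫⁻ s in Ioi (0:ℝ), G s) - ENNReal.ofReal b * 4⁻¹ < ∫⁻ s in Ioi (0:ℝ), G s :=
        ENNReal.sub_lt_self hI0ne (zero_le.trans_lt hc).ne' hεne
      have hlt2 : (∫⁻ s in Ioi (0:ℝ), G s) - ENNReal.ofReal b * 4⁻¹
          < ⨆ N : ℕ, ∫⁻ s in Ioc (0:ℝ) (N:ℝ), G s := by rw [hkey]; exact hlt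
      obtain ⟨N, hN⟩ := lt_iSup_iff.mp hlt2
      have hNle : (∫⁻ s in Ioi (0:ℝ), G s)
          ≤ (∫⁻ s in Ioc (0:ℝ) (N:ℝ), G s) + ENNReal.ofReal b * 4⁻¹ :=
        tsub_le_iff_right.mp hN.le
      have hsplitN : (∫⁻ s in Ioi (0:ℝ), G s)
          = (∫⁻ s in Ioc (0:ℝ) (N:ℝ), G s) + ∫⁻ s in Ioi ((N:ℝ)), G s := by
        rw [← Ioc_union_Ioi_eq_Ioi (Nat.cast_nonneg N : (0:ℝ) ≤ (N:ℝ)),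
          lintegral_union measurableSet_Ioi (Ioc_disjoint_Ioi le_rfl)]
      have hJfin : (∫⁻ s in Ioc (0:ℝ) (N:ℝ), G s) ≠ ⊤ :=
        ne_top_of_le_ne_top hI0ne (lintegral_mono_set Ioc_subset_Ioi_self)
      have htail : (∫⁻ s in Ioi ((N:ℝ)), G s) ≤ ENNReal.ofReal b * 4⁻¹ := by
        rw [hsplitN] at hNle
        exact (ENNReal.add_le_add_iff_left hJfin).mp hNle
      refine ⟨max 1 (N:ℝ), le_max_left _ _, ?_⟩
      refine le_trans (lintegral_mono_set (Ioi_subset_Ioi ?_)) htail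
      calc (N:ℝ) ≤ max 1 (N:ℝ) := le_max_right _ _
        _ = 1 * max 1 (N:ℝ) := (one_mul _).symm
        _ ≤ (r:ℝ) * max 1 (N:ℝ) :=
          mul_le_mul_of_nonneg_right hr1 (le_trans zero_le_one (le_max_left _ _))
  have hx1pos : (0:ℝ) < x1 := lt_of_lt_of_le one_pos hx11
  -- the central probabilistic estimate
  have hProb : ∀ x : ℝ, x1 ≤ x →
      (∫⁻ s in Ioi ((r:ℝ)*x + b), G s)
        ≤ 4 * ENNReal.ofReal b * μ {ω | ENNReal.ofReal x < S ω} := by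
    intro x hx
    have hxpos : (0:ℝ) < x := lt_of_lt_of_le hx1pos hx
    set p : ℕ → ℝ≥0∞ := fun k => G ((r:ℝ)*x + b*((k:ℝ)+1)) with hpdef
    set A : ℕ → Set Ω := fun k => {ω | (r:ℝ)*x + b*((k:ℝ)+1) < ∑ j, Y (-(k:ℤ)-1) j ω}
      with hAdef
    set B : ℕ → Set Ω :=
      fun k => {ω | ∑ m ∈ Finset.range (k+1), τ (-1 - (m:ℤ)) ω ≤ 2*a*((k:ℝ)+1)} with hBdef
    set D : ℕ → Set Ω := fun k => A k ∩ B k with hDdef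
    have hDmeas : ∀ k, MeasurableSet (D k) := by
      intro k
      refine (measurableSet_lt measurable_const (hVmeas _)).inter
        (measurableSet_le (Finset.measurable_sum _ fun m _ => hτmeas _) measurable_const)
    have hμA : ∀ k, μ (A k) = p k := fun k => hGident _ _
    have hpD : ∀ k, p k ≤ 2 * μ (D k) := by
      intro k
      have h1 : μ (D k) = p k * μ (B k) := by
        rw [hDdef]
        show μ (A k ∩ B k) = _
        rw [hAdef, hBdef]
        show μ ({ω | (r:ℝ)*x + b*((k:ℝ)+1) < ∑ j, Y (-(k:ℤ)-1) j ω}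
          ∩ {ω | ∑ m ∈ Finset.range (k+1), τ (-1 - (m:ℤ)) ω ≤ 2*a*((k:ℝ)+1)}) = _
        rw [hABind k _ _, hGident]
      have h2 : (1:ℝ≥0∞) ≤ 2 * μ (B k) := by
        calc (1:ℝ≥0∞) = 2 * 2⁻¹ := (ENNReal.mul_inv_cancel two_ne_zero ENNReal.ofNat_ne_top).symm
          _ ≤ 2 * μ (B k) := mul_le_mul_right (hBhalf k) 2
      calc p k = p k * 1 := (mul_one _).symm
        _ ≤ p k * (2 * μ (B k)) := mul_le_mul_right h2 _
        _ = 2 * (p k * μ (B k)) := by ring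
        _ = 2 * μ (D k) := by rw [h1]
    have hpair : ∀ j k, j ≠ k → μ (D j ∩ D k) ≤ p j * p k := by
      intro j k hjk
      have hne : (-(j:ℤ)-1) ≠ (-(k:ℤ)-1) := by omega
      calc μ (D j ∩ D k) ≤ μ (A j ∩ A k) :=
            measure_mono (inter_subset_inter inter_subset_left inter_subset_left)
        _ = μ (A j) * μ (A k) := hAind _ _ hne _ _
        _ = p j * p k := by rw [hμA, hμA]
    have hsum4 : (∑' k, p k) ≤ 4⁻¹ := by
      have h1 : ENNReal.ofReal b * ∑' k, p k ≤ ∫⁻ s in Ioi ((r:ℝ)*x), G s := by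
        rw [aux_lintegral_Ioi G ((r:ℝ)*x) b hb, ← ENNReal.tsum_mul_left]
        exact ENNReal.tsum_le_tsum fun k => hlowG ((r:ℝ)*x) k
      have h2 : (∫⁻ s in Ioi ((r:ℝ)*x), G s) ≤ ∫⁻ s in Ioi ((r:ℝ)*x1), G s :=
        lintegral_mono_set (Ioi_subset_Ioi (mul_le_mul_of_nonneg_left hx hrpos.le))
      exact (ENNReal.mul_le_mul_iff_right hbne0 ENNReal.ofReal_ne_top).mp
        (h1.trans (h2.trans hx1tail))
    have hquarter : ∀ m : ℕ,
        (∑ k ∈ Finset.range m, p k) ≤ 4 * μ {ω | ENNReal.ofReal x < S ω} := by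
      intro m
      have hQle : (∑ k ∈ Finset.range m, p k) ≤ 4⁻¹ :=
        le_trans (ENNReal.sum_le_tsum _) hsum4
      have hQfin : (∑ k ∈ Finset.range m, p k) ≠ ⊤ :=
        (hQle.trans_lt (by norm_num)).ne
      have hbon := aux_bonferroni μ D hDmeas (Finset.range m)
      have hDE : μ (⋃ k ∈ Finset.range m, D k) ≤ μ {ω | ENNReal.ofReal x < S ω} := by
        have hbad : μ {ω | ¬ (∀ (n : ℕ) (j : Fin r), (∑ i ∈ Finset.Icc (-(n:ℤ)) 0, Y i j ω)
            ≤ net.Z (-(n:ℤ)) 0 (fun _ => 0) (fun l => ζ l ω))} = 0 := by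
          have h := hae
          rwa [ae_iff] at h
        have hsub : (⋃ k ∈ Finset.range m, D k) ⊆ {ω | ENNReal.ofReal x < S ω}
            ∪ {ω | ¬ (∀ (n : ℕ) (j : Fin r), (∑ i ∈ Finset.Icc (-(n:ℤ)) 0, Y i j ω)
              ≤ net.Z (-(n:ℤ)) 0 (fun _ => 0) (fun l => ζ l ω))} := by
          intro ω hω
          simp only [mem_iUnion, exists_prop] at hω
          obtain ⟨k, -, hk⟩ := hω
          by_cases hP : ∀ (n : ℕ) (j : Fin r), (∑ i ∈ Finset.Icc (-(n:ℤ)) 0, Y i j ω)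
              ≤ net.Z (-(n:ℤ)) 0 (fun _ => 0) (fun l => ζ l ω)
          · left
            exact hpoint x hxpos.le k ω hP hk.1 hk.2
          · right; exact hP
        calc μ (⋃ k ∈ Finset.range m, D k) ≤ _ := measure_mono hsub
          _ ≤ μ {ω | ENNReal.ofReal x < S ω} + _ := measure_union_le _ _
          _ = μ {ω | ENNReal.ofReal x < S ω} := by rw [hbad, add_zero]
      have hpp : (∑ n ∈ Finset.range m, ∑ j ∈ (Finset.range m).erase n, μ (D j ∩ D n))
          ≤ 4⁻¹ * ∑ k ∈ Finset.range m, p k := by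
        calc (∑ n ∈ Finset.range m, ∑ j ∈ (Finset.range m).erase n, μ (D j ∩ D n))
            ≤ ∑ n ∈ Finset.range m, ∑ j ∈ (Finset.range m).erase n, p j * p n :=
              Finset.sum_le_sum fun n _ => Finset.sum_le_sum fun j hj =>
                hpair j n (Finset.ne_of_mem_erase hj)
          _ = ∑ n ∈ Finset.range m, (∑ j ∈ (Finset.range m).erase n, p j) * p n := by
              simp [Finset.sum_mul]
          _ ≤ ∑ n ∈ Finset.range m, 4⁻¹ * p n :=
              Finset.sum_le_sum fun n _ => mul_le_mul_left
                (le_trans (ENNReal.sum_le_tsum _) hsum4) _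
          _ = 4⁻¹ * ∑ k ∈ Finset.range m, p k := (Finset.mul_sum _ _ _).symm
      have h24 : (2:ℝ≥0∞) * 4⁻¹ = 2⁻¹ := by
        rw [show (4:ℝ≥0∞) = 2*2 by norm_num,
          ENNReal.mul_inv (Or.inl two_ne_zero) (Or.inl ENNReal.ofNat_ne_top), ← mul_assoc,
          ENNReal.mul_inv_cancel two_ne_zero ENNReal.ofNat_ne_top, one_mul]
      have hstep : (∑ k ∈ Finset.range m, p k)
          ≤ 2 * μ {ω | ENNReal.ofReal x < S ω} + 2⁻¹ * ∑ k ∈ Finset.range m, p k := by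
        calc (∑ k ∈ Finset.range m, p k) ≤ ∑ k ∈ Finset.range m, 2 * μ (D k) :=
              Finset.sum_le_sum fun k _ => hpD k
          _ = 2 * ∑ k ∈ Finset.range m, μ (D k) := (Finset.mul_sum _ _ _).symm
          _ ≤ 2 * (μ (⋃ k ∈ Finset.range m, D k)
              + ∑ n ∈ Finset.range m, ∑ j ∈ (Finset.range m).erase n, μ (D j ∩ D n)) :=
              mul_le_mul_right hbon _
          _ ≤ 2 * (μ {ω | ENNReal.ofReal x < S ω} + 4⁻¹ * ∑ k ∈ Finset.range m, p k) :=
              mul_le_mul_right (add_le_add hDE hpp) _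
          _ = 2 * μ {ω | ENNReal.ofReal x < S ω}
              + (2 * 4⁻¹) * ∑ k ∈ Finset.range m, p k := by ring
          _ = _ := by rw [h24]
      have hhalf : 2⁻¹ * (∑ k ∈ Finset.range m, p k) ≤ 2 * μ {ω | ENNReal.ofReal x < S ω} := by
        have h0 : 2⁻¹ * (∑ k ∈ Finset.range m, p k) + 2⁻¹ * (∑ k ∈ Finset.range m, p k)
            ≤ 2 * μ {ω | ENNReal.ofReal x < S ω} + 2⁻¹ * (∑ k ∈ Finset.range m, p k) := by
          calc 2⁻¹ * (∑ k ∈ Finset.range m, p k) + 2⁻¹ * (∑ k ∈ Finset.range m, p k)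
              = (2⁻¹ + 2⁻¹) * ∑ k ∈ Finset.range m, p k := (add_mul _ _ _).symm
            _ = ∑ k ∈ Finset.range m, p k := by rw [ENNReal.inv_two_add_inv_two, one_mul]
            _ ≤ _ := hstep
        exact (ENNReal.add_le_add_iff_right
          (ENNReal.mul_ne_top (by norm_num) hQfin)).mp h0
      calc (∑ k ∈ Finset.range m, p k) = 2 * (2⁻¹ * ∑ k ∈ Finset.range m, p k) := by
            rw [← mul_assoc, ENNReal.mul_inv_cancel two_ne_zero ENNReal.ofNat_ne_top, one_mul]
        _ ≤ 2 * (2 * μ {ω | ENNReal.ofReal x < S ω}) := mul_le_mul_right hhalf _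
        _ = 4 * μ {ω | ENNReal.ofReal x < S ω} := by rw [← mul_assoc]; norm_num
    have htsum : (∑' k, p k) ≤ 4 * μ {ω | ENNReal.ofReal x < S ω} := by
      rw [ENNReal.tsum_eq_iSup_nat]
      exact iSup_le hquarter
    calc (∫⁻ s in Ioi ((r:ℝ)*x + b), G s)
        = ∑' k : ℕ, ∫⁻ s in Ioc (((r:ℝ)*x + b) + b*(k:ℝ)) (((r:ℝ)*x + b) + b*((k:ℝ)+1)), G s :=
          aux_lintegral_Ioi G _ b hb
      _ ≤ ∑' k : ℕ, ENNReal.ofReal b * G (((r:ℝ)*x + b) + b*(k:ℝ)) :=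
          ENNReal.tsum_le_tsum fun k => huppG _ k
      _ = ∑' k : ℕ, ENNReal.ofReal b * p k := by
          refine tsum_congr fun k => ?_
          rw [hpdef]
          congr 2
          ring
      _ = ENNReal.ofReal b * ∑' k, p k := ENNReal.tsum_mul_left
      _ ≤ ENNReal.ofReal b * (4 * μ {ω | ENNReal.ofReal x < S ω}) := mul_le_mul_right htsum _
      _ = 4 * ENNReal.ofReal b * μ {ω | ENNReal.ofReal x < S ω} := by ring
  -- the tail integral of S is finite
  have hnullS : μ {ω | S ω = ⊤} = 0 := by
    have h1 : ∀ᵐ ω ∂μ, S ω ^ (α-1) < ⊤ := ae_lt_top (hSmeas.pow_const _) hSint.ne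
    rw [ae_iff] at h1
    refine measure_mono_null (fun ω hω => ?_) h1
    show ¬ S ω ^ (α-1) < ⊤
    rw [show S ω = ⊤ from hω, ENNReal.top_rpow_of_pos hα1]
    exact lt_irrefl _
  have hItail : ∫⁻ t in Ioi (0:ℝ),
      μ {ω | ENNReal.ofReal t < S ω} * ENNReal.ofReal (t ^ (α-2)) < ⊤ := by
    have hSr : Measurable fun ω => (S ω).toReal := hSmeas.ennreal_toReal
    have hkey := lintegral_rpow_eq_lintegral_meas_lt_mul μ
      (f := fun ω => (S ω).toReal)
      (Eventually.of_forall fun ω => ENNReal.toReal_nonneg) hSr.aemeasurable hα1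
    rw [show α - 1 - 1 = α - 2 by ring] at hkey
    have hle1 : ∫⁻ ω, ENNReal.ofReal ((S ω).toReal ^ (α-1)) ∂μ < ⊤ := by
      refine lt_of_le_of_lt (lintegral_mono fun ω => ?_) hSint
      rw [← ENNReal.ofReal_rpow_of_nonneg ENNReal.toReal_nonneg hα1.le]
      exact ENNReal.rpow_le_rpow ENNReal.ofReal_toReal_le hα1.le
    rw [hkey] at hle1
    have hne : ENNReal.ofReal (α-1) ≠ 0 := by
      rw [Ne, ENNReal.ofReal_eq_zero]; linarith
    have hfin2 : ∫⁻ t in Ioi (0:ℝ),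
        μ {ω | t < (S ω).toReal} * ENNReal.ofReal (t ^ (α-2)) < ⊤ := by
      by_contra hcon
      rw [not_lt, top_le_iff] at hcon
      rw [hcon, ENNReal.mul_top hne] at hle1
      exact lt_irrefl _ hle1
    have hmt : Measurable fun t : ℝ => μ {ω | t < (S ω).toReal} :=
      Antitone.measurable fun t t' h => measure_mono fun ω hω => lt_of_le_of_lt h hω
    refine lt_of_le_of_lt (setLIntegral_mono
      (hmt.mul ((measurable_id.pow measurable_const).ennreal_ofReal)) fun t ht => ?_) hfin2
    refine mul_le_mul_left ?_ _
    calc μ {ω | ENNReal.ofReal t < S ω}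
        ≤ μ ({ω | t < (S ω).toReal} ∪ {ω | S ω = ⊤}) := by
          refine measure_mono fun ω hω => ?_
          by_cases hT : S ω = ⊤
          · exact Or.inr hT
          · exact Or.inl ((ENNReal.ofReal_lt_iff_lt_toReal (le_of_lt ht) hT).mp hω)
      _ ≤ μ {ω | t < (S ω).toReal} + μ {ω | S ω = ⊤} := measure_union_le _ _
      _ = μ {ω | t < (S ω).toReal} := by rw [hnullS, add_zero]
  -- constants for the change of variables
  set s1 : ℝ := 2*b + 2*(r:ℝ)*x1 with hs1def
  have hs1pos : (0:ℝ) < s1 := by positivity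
  set c2 : ℝ := min 1 ((2:ℝ)^(2-α)) with hc2def
  have hc2pos : 0 < c2 := lt_min one_pos (Real.rpow_pos_of_pos two_pos _)
  set c4 : ℝ := (c2/2) / (2*(r:ℝ))^(α-1) with hc4def
  have hc4pos : 0 < c4 := by
    apply div_pos (by linarith)
    exact Real.rpow_pos_of_pos (by positivity) _
  set J : ℝ × ℝ → ℝ≥0∞ := fun q =>
    if (r:ℝ)*q.2 + b < q.1 then G q.1 * ENNReal.ofReal (q.2 ^ (α-2)) else 0 with hJdef
  have hJmeas : Measurable J := by
    refine Measurable.ite ?_ ?_ measurable_const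
    · exact measurableSet_lt ((measurable_snd.const_mul _).add_const b) measurable_fst
    · exact (hGmeas.comp measurable_fst).mul
        ((measurable_snd.pow measurable_const).ennreal_ofReal)
  -- lower bound for the inner integral
  have hinner : ∀ s : ℝ, s ∈ Ioi s1 →
      G s * ENNReal.ofReal (c4 * s^(α-1)) ≤ ∫⁻ x in Ioi x1, J (s, x) := by
    intro s hs
    rw [mem_Ioi] at hs
    have hs0 : 0 < s := lt_trans hs1pos hs
    set h : ℝ := (s - b)/(r:ℝ) with hhdef
    have h2b : 2*b < s := by
      have hx : (1:ℝ)*1 ≤ (r:ℝ)*x1 := mul_le_mul hr1 hx11 zero_le_one hrpos.le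
      rw [hs1def] at hs
      linarith
    have hsb : 0 < s - b := by linarith
    have hhpos : 0 < h := div_pos hsb hrpos
    have hh2 : x1 < h/2 := by
      rw [hhdef, div_div, lt_div_iff₀ (by positivity)]
      rw [hs1def] at hs
      linarith
    have hhs : s/(2*(r:ℝ)) ≤ h := by
      rw [hhdef, div_le_div_iff₀ (by positivity) hrpos]
      have := mul_lt_mul_of_pos_right h2b hrpos
      linarith
    have hsub : Ioo (h/2) h ⊆ {x : ℝ | (r:ℝ)*x + b < s} ∩ Ioi x1 := by
      rintro x ⟨hxl, hxr⟩
      constructor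
      · show (r:ℝ)*x + b < s
        have hrx : (r:ℝ)*x < (r:ℝ)*h := (mul_lt_mul_iff_right₀ hrpos).mpr hxr
        rw [hhdef, mul_div_cancel₀ _ hrpos.ne'] at hrx
        linarith
      · show x1 < x
        linarith
    have hlow2 : ∀ x ∈ Ioo (h/2) h,
        ENNReal.ofReal (c2 * h^(α-2)) ≤ ENNReal.ofReal (x^(α-2)) := by
      intro x hx
      apply ENNReal.ofReal_le_ofReal
      have hxpos : 0 < x := lt_trans (by positivity) hx.1
      rcases le_or_gt 2 α with hcase | hcase
      · have hr1' : (h/2)^(α-2) ≤ x^(α-2) :=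
          Real.rpow_le_rpow (by positivity) hx.1.le (by linarith)
        have hr2 : (h/2)^(α-2) = h^(α-2) * (2:ℝ)^(2-α) := by
          rw [Real.div_rpow hhpos.le (by norm_num), div_eq_mul_inv,
            ← Real.rpow_neg (by norm_num)]
          congr 1
          ring
        have hr3 : c2 * h^(α-2) ≤ h^(α-2) * (2:ℝ)^(2-α) := by
          rw [mul_comm (h^(α-2))]
          exact mul_le_mul_of_nonneg_right (min_le_right _ _) (Real.rpow_nonneg hhpos.le _)
        linarith
      · have hr1' : h^(α-2) ≤ x^(α-2) :=
          Real.rpow_le_rpow_of_nonpos hxpos hx.2.le (by linarith)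
        have hr3 : c2 * h^(α-2) ≤ h^(α-2) := by
          calc c2 * h^(α-2) ≤ 1 * h^(α-2) :=
                mul_le_mul_of_nonneg_right (min_le_left _ _) (Real.rpow_nonneg hhpos.le _)
            _ = h^(α-2) := one_mul _
        linarith
    have hvol : (ENNReal.ofReal (c2 * h^(α-2))) * volume (Ioo (h/2) h)
        ≤ ∫⁻ x in Ioo (h/2) h, ENNReal.ofReal (x^(α-2)) := by
      have := setLIntegral_mono (μ := volume)
        ((measurable_id.pow measurable_const).ennreal_ofReal) hlow2
      rwa [setLIntegral_const] at this
    calc G s * ENNReal.ofReal (c4 * s^(α-1))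
        ≤ G s * ENNReal.ofReal (c2 * h^(α-2) * (h/2)) := by
          apply mul_le_mul_right
          apply ENNReal.ofReal_le_ofReal
          have e1 : c2 * h^(α-2) * (h/2) = (c2/2) * h^(α-1) := by
            rw [show α-1 = (α-2)+1 by ring, Real.rpow_add_one hhpos.ne']
            ring
          rw [e1]
          have e2 : (s/(2*(r:ℝ)))^(α-1) ≤ h^(α-1) :=
            Real.rpow_le_rpow (by positivity) hhs hα1.le
          have e3 : c4 * s^(α-1) = (c2/2) * (s/(2*(r:ℝ)))^(α-1) := by
            rw [hc4def, Real.div_rpow hs0.le (by positivity)]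
            ring
          rw [e3]
          exact mul_le_mul_of_nonneg_left e2 (by linarith)
      _ = G s * (ENNReal.ofReal (c2 * h^(α-2)) * volume (Ioo (h/2) h)) := by
          rw [Real.volume_Ioo, ← ENNReal.ofReal_mul (by positivity)]
          congr 2
          ring
      _ ≤ G s * ∫⁻ x in Ioo (h/2) h, ENNReal.ofReal (x^(α-2)) := mul_le_mul_right hvol _
      _ = ∫⁻ x in Ioo (h/2) h, G s * ENNReal.ofReal (x^(α-2)) :=
          (lintegral_const_mul' _ _ (measure_ne_top μ _)).symm
      _ = ∫⁻ x in Ioo (h/2) h, J (s, x) := by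
          refine setLIntegral_congr_fun measurableSet_Ioo (fun x hx => ?_)
          have hcnd : (r:ℝ)*x + b < s := (hsub hx).1
          simp only [hJdef]
          rw [if_pos hcnd]
      _ ≤ ∫⁻ x in Ioi x1, J (s, x) :=
          lintegral_mono_set fun x hx => lt_trans hh2 hx.1
  -- the swap
  have hswap : ∫⁻ s in Ioi s1, ∫⁻ x in Ioi x1, J (s, x) = ∫⁻ x in Ioi x1, ∫⁻ s in Ioi s1, J (s, x) :=
    lintegral_lintegral_swap hJmeas.aemeasurable
  have hfx : ∀ x : ℝ, x ∈ Ioi x1 → (∫⁻ s in Ioi s1, J (s, x))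
      ≤ ENNReal.ofReal (x^(α-2)) * (4 * ENNReal.ofReal b * μ {ω | ENNReal.ofReal x < S ω}) := by
    intro x hx
    have he : ∀ s : ℝ, J (s, x)
        = (Ioi ((r:ℝ)*x + b)).indicator (fun s => G s * ENNReal.ofReal (x^(α-2))) s := by
      intro s
      rw [hJdef, indicator_apply]
      simp only [mem_Ioi]
    calc (∫⁻ s in Ioi s1, J (s, x))
        = ∫⁻ s in Ioi ((r:ℝ)*x + b) ∩ Ioi s1, G s * ENNReal.ofReal (x^(α-2)) := by
          simp_rw [he]
          exact setLIntegral_indicator measurableSet_Ioi _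
      _ ≤ ∫⁻ s in Ioi ((r:ℝ)*x + b), G s * ENNReal.ofReal (x^(α-2)) :=
          lintegral_mono_set inter_subset_left
      _ = (∫⁻ s in Ioi ((r:ℝ)*x + b), G s) * ENNReal.ofReal (x^(α-2)) :=
          lintegral_mul_const' _ _ ENNReal.ofReal_ne_top
      _ ≤ (4 * ENNReal.ofReal b * μ {ω | ENNReal.ofReal x < S ω}) * ENNReal.ofReal (x^(α-2)) :=
          mul_le_mul_left (hProb x (le_of_lt hx)) _
      _ = ENNReal.ofReal (x^(α-2)) * (4 * ENNReal.ofReal b * μ {ω | ENNReal.ofReal x < S ω}) :=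
          mul_comm _ _
  have hmeasmuS : Measurable fun x : ℝ => μ {ω | ENNReal.ofReal x < S ω} :=
    Antitone.measurable fun t t' h => measure_mono fun ω hω =>
      lt_of_le_of_lt (ENNReal.ofReal_le_ofReal h) hω
  have hchain : ENNReal.ofReal c4 * ∫⁻ s in Ioi s1, G s * ENNReal.ofReal (s^(α-1))
      ≤ 4 * ENNReal.ofReal b * ∫⁻ t in Ioi (0:ℝ),
        μ {ω | ENNReal.ofReal t < S ω} * ENNReal.ofReal (t ^ (α-2)) := by
    calc ENNReal.ofReal c4 * ∫⁻ s in Ioi s1, G s * ENNReal.ofReal (s^(α-1))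
        = ∫⁻ s in Ioi s1, G s * ENNReal.ofReal (c4 * s^(α-1)) := by
          rw [← lintegral_const_mul' _ _ ENNReal.ofReal_ne_top]
          refine lintegral_congr fun s => ?_
          rw [ENNReal.ofReal_mul hc4pos.le]
          ring
      _ ≤ ∫⁻ s in Ioi s1, ∫⁻ x in Ioi x1, J (s, x) := by
          refine setLIntegral_mono (Measurable.lintegral_prod_right hJmeas) hinner
      _ = ∫⁻ x in Ioi x1, ∫⁻ s in Ioi s1, J (s, x) := hswap
      _ ≤ ∫⁻ x in Ioi x1, ENNReal.ofReal (x^(α-2))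
            * (4 * ENNReal.ofReal b * μ {ω | ENNReal.ofReal x < S ω}) := by
          refine setLIntegral_mono ?_ hfx
          exact ((measurable_id.pow measurable_const).ennreal_ofReal).mul
            (hmeasmuS.const_mul _)
      _ = 4 * ENNReal.ofReal b * ∫⁻ x in Ioi x1,
            μ {ω | ENNReal.ofReal x < S ω} * ENNReal.ofReal (x ^ (α-2)) := by
          rw [← lintegral_const_mul' (4 * ENNReal.ofReal b) _
            (ENNReal.mul_ne_top (by norm_num) ENNReal.ofReal_ne_top)]
          refine lintegral_congr fun x => ?_
          ring
      _ ≤ 4 * ENNReal.ofReal b * ∫⁻ t in Ioi (0:ℝ),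
            μ {ω | ENNReal.ofReal t < S ω} * ENNReal.ofReal (t ^ (α-2)) :=
          mul_le_mul_right (lintegral_mono_set (Ioi_subset_Ioi (by linarith))) _
  have hbigfin : ∫⁻ s in Ioi s1, G s * ENNReal.ofReal (s^(α-1)) < ⊤ := by
    by_contra hcon
    rw [not_lt, top_le_iff] at hcon
    have hc4ne : ENNReal.ofReal c4 ≠ 0 := by
      rw [Ne, ENNReal.ofReal_eq_zero]; linarith
    rw [hcon, ENNReal.mul_top hc4ne] at hchain
    have hfin : 4 * ENNReal.ofReal b * ∫⁻ t in Ioi (0:ℝ),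
        μ {ω | ENNReal.ofReal t < S ω} * ENNReal.ofReal (t ^ (α-2)) < ⊤ :=
      ENNReal.mul_lt_top (ENNReal.mul_lt_top (by norm_num) ENNReal.ofReal_lt_top) hItail
    rw [top_le_iff.mp hchain] at hfin
    exact lt_irrefl _ hfin
  have hsmall : ∫⁻ s in Ioc (0:ℝ) s1, G s * ENNReal.ofReal (s^(α-1)) < ⊤ := by
    have hstep : ∀ s ∈ Ioc (0:ℝ) s1,
        G s * ENNReal.ofReal (s^(α-1)) ≤ ENNReal.ofReal (s1^(α-1)) * G s := by
      intro s hs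
      rw [mul_comm]
      exact mul_le_mul_left
        (ENNReal.ofReal_le_ofReal (Real.rpow_le_rpow hs.1.le hs.2 hα1.le)) _
    refine lt_of_le_of_lt (setLIntegral_mono (hGmeas.const_mul _) hstep) ?_
    rw [lintegral_const_mul' _ _ ENNReal.ofReal_ne_top]
    exact ENNReal.mul_lt_top ENNReal.ofReal_lt_top
      (lt_of_le_of_lt (lintegral_mono_set Ioc_subset_Ioi_self) hI0)
  have htot : ∫⁻ t in Ioi (0:ℝ), G t * ENNReal.ofReal (t^(α-1)) < ⊤ := by
    rw [← Ioc_union_Ioi_eq_Ioi hs1pos.le,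
      lintegral_union measurableSet_Ioi (Ioc_disjoint_Ioi le_rfl)]
    exact ENNReal.add_lt_top.mpr ⟨hsmall, hbigfin⟩
  -- conclusion via the layer cake formula for Z_0
  have hZ00nn : ∀ ω, 0 ≤ net.Z 0 0 (fun l => T l ω) fun l => ζ l ω := by
    intro ω
    have h := net.causality 0 0 (fun l => T l ω) (fun l => ζ l ω) le_rfl (hTmono ω)
    have h0 : T 0 ω = 0 := hT0 ω
    simp only [MonSepNet.Z]
    linarith
  constructor
  · exact ((hZmeas 0 0).pow measurable_const).aestronglyMeasurable
  · rw [hasFiniteIntegral_iff_ofReal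
      (Eventually.of_forall fun ω => Real.rpow_nonneg (hZ00nn ω) α)]
    have heq : ∀ ω, ENNReal.ofReal ((net.Z 0 0 (fun l => T l ω) fun l => ζ l ω) ^ α)
        = ENNReal.ofReal ((∑ j, Y 0 j ω)^α) := fun ω => by rw [hZeq 0 ω]
    calc ∫⁻ ω, ENNReal.ofReal ((net.Z 0 0 (fun l => T l ω) fun l => ζ l ω) ^ α) ∂μ
        = ∫⁻ ω, ENNReal.ofReal ((∑ j, Y 0 j ω)^α) ∂μ := lintegral_congr heq
      _ = ENNReal.ofReal α * ∫⁻ t in Ioi (0:ℝ),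
            μ {ω | t < ∑ j, Y 0 j ω} * ENNReal.ofReal (t^(α-1)) :=
          lintegral_rpow_eq_lintegral_meas_lt_mul μ (Eventually.of_forall hV0nn)
            (hVmeas 0).aemeasurable hα0
      _ < ⊤ := by
          refine ENNReal.mul_lt_top ENNReal.ofReal_lt_top ?_
          rw [hGdef] at htot
          exact htot
end
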